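/- For the odd-rule CA with neighborhood F = x + 1/y + x/y (Odd-rule 013), |F^{2^n - 1}| = 3^n for all n ≥ 0. -/

import Mathlib

/-- The ring `R = GF(2)[x, x⁻¹, y, y⁻¹]`, with `x^i y^j` the element
`AddMonoidAlgebra.single (i, j) 1`. -/
abbrev R2 := AddMonoidAlgebra (ZMod 2) (ℤ × ℤ)

/-- The monomial `x^i y^j` of `R`. -/
noncomputable def mon (i j : ℤ) : R2 := AddMonoidAlgebra.single (i, j) 1

lemma self_add_self (f : R2) : f + f = 0 := by
  ext a
  rw [AddMonoidAlgebra.coeff_add, Finsupp.add_apply]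
  exact CharTwo.add_self_eq_zero _

lemma sq_add (a b : R2) : (a + b) ^ 2 = a ^ 2 + b ^ 2 := by
  linear_combination (self_add_self (a * b))

lemma mon_mul (i j k l : ℤ) : mon i j * mon k l = mon (i + k) (j + l) := by
  simp [mon, AddMonoidAlgebra.single_mul_single]

lemma mon_sq (i j : ℤ) : (mon i j) ^ 2 = mon (2 * i) (2 * j) := by
  rw [sq, mon_mul]; ring_nf

lemma F_pow_two_pow (n : ℕ) :
    (mon 1 0 + mon 0 (-1) + mon 1 (-1)) ^ (2 ^ n) =
      mon (2 ^ n) 0 + mon 0 (-(2 ^ n)) + mon (2 ^ n) (-(2 ^ n)) := by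
  induction n with
  | zero => simp
  | succ n ih =>
    have : (2 : ℕ) ^ (n + 1) = 2 ^ n * 2 := by ring
    rw [this, pow_mul, ih, sq_add, sq_add, mon_sq, mon_sq, mon_sq]
    have e : (2 : ℤ) ^ (n + 1) = 2 * 2 ^ n := by ring
    rw [e]; ring_nf

lemma support_mul_mon (P : R2) (a b : ℤ) :
    (P * mon a b).coeff.support = P.coeff.support.map (addRightEmbedding (a, b)) := by
  exact AddMonoidAlgebra.support_coeff_mul_single P 1 (by simp) (a, b)

lemma key (n : ℕ) :
    ((mon 1 0 + mon 0 (-1) + mon 1 (-1)) ^ (2 ^ n - 1)).coeff.support.card = 3 ^ n ∧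
    ∀ p ∈ ((mon 1 0 + mon 0 (-1) + mon 1 (-1)) ^ (2 ^ n - 1)).coeff.support,
      0 ≤ p.1 ∧ p.1 ≤ 2 ^ n - 1 ∧ -((2 : ℤ) ^ n - 1) ≤ p.2 ∧ p.2 ≤ 0 := by
  induction n with
  | zero =>
    constructor
    · simp [AddMonoidAlgebra.one_def, Finsupp.support_single_ne_zero]
    · intro p hp
      norm_num at hp ⊢
      subst hp
      simp
  | succ n ih =>
    obtain ⟨hcard, hbox⟩ := ih
    set F : R2 := mon 1 0 + mon 0 (-1) + mon 1 (-1) with hF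
    set P : R2 := F ^ (2 ^ n - 1) with hP
    have hsplit : (2 : ℕ) ^ (n + 1) - 1 = (2 ^ n - 1) + 2 ^ n := by
      have h1 : (1 : ℕ) ≤ 2 ^ n := Nat.one_le_two_pow
      have h2 : (2 : ℕ) ^ (n + 1) = 2 * 2 ^ n := by ring
      omega
    have hpos : (1 : ℤ) ≤ 2 ^ n := by exact_mod_cast Nat.one_le_two_pow (n := n)
    have hrw : F ^ (2 ^ (n + 1) - 1) =
        P * mon (2 ^ n) 0 + P * mon 0 (-(2 ^ n)) + P * mon (2 ^ n) (-(2 ^ n)) := by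
      rw [hsplit, pow_add, F_pow_two_pow, mul_add, mul_add]
    -- supports of the three pieces
    have hSA := support_mul_mon P (2 ^ n) 0
    have hSB := support_mul_mon P 0 (-(2 ^ n))
    have hSC := support_mul_mon P (2 ^ n) (-(2 ^ n))
    -- membership characterizations
    have memA : ∀ p ∈ (P * mon (2 ^ n) 0).coeff.support,
        (2 : ℤ) ^ n ≤ p.1 ∧ p.1 ≤ 2 ^ (n+1) - 1 ∧ -((2:ℤ) ^ n - 1) ≤ p.2 ∧ p.2 ≤ 0 := by
      intro p hp
      rw [hSA, Finset.mem_map] at hp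
      obtain ⟨q, hq, rfl⟩ := hp
      obtain ⟨h1, h2, h3, h4⟩ := hbox q hq
      have e : (2 : ℤ) ^ (n + 1) = 2 * 2 ^ n := by ring
      simp only [addRightEmbedding_apply, Prod.fst_add, Prod.snd_add]
      constructor; · linarith
      constructor; · rw [e]; linarith
      constructor; · linarith
      · linarith
    have memB : ∀ p ∈ (P * mon 0 (-(2 ^ n))).coeff.support,
        0 ≤ p.1 ∧ p.1 ≤ (2:ℤ) ^ n - 1 ∧ -((2:ℤ) ^ (n+1) - 1) ≤ p.2 ∧ p.2 ≤ -(2:ℤ)^n := by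
      intro p hp
      rw [hSB, Finset.mem_map] at hp
      obtain ⟨q, hq, rfl⟩ := hp
      obtain ⟨h1, h2, h3, h4⟩ := hbox q hq
      have e : (2 : ℤ) ^ (n + 1) = 2 * 2 ^ n := by ring
      simp only [addRightEmbedding_apply, Prod.fst_add, Prod.snd_add]
      constructor; · linarith
      constructor; · linarith
      constructor; · rw [e]; linarith
      · linarith
    have memC : ∀ p ∈ (P * mon (2 ^ n) (-(2 ^ n))).coeff.support,
        (2:ℤ) ^ n ≤ p.1 ∧ p.1 ≤ (2:ℤ) ^ (n+1) - 1 ∧ -((2:ℤ) ^ (n+1) - 1) ≤ p.2 ∧ p.2 ≤ -(2:ℤ)^n := by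
      intro p hp
      rw [hSC, Finset.mem_map] at hp
      obtain ⟨q, hq, rfl⟩ := hp
      obtain ⟨h1, h2, h3, h4⟩ := hbox q hq
      have e : (2 : ℤ) ^ (n + 1) = 2 * 2 ^ n := by ring
      simp only [addRightEmbedding_apply, Prod.fst_add, Prod.snd_add]
      constructor; · linarith
      constructor; · rw [e]; linarith
      constructor; · rw [e]; linarith
      · linarith
    have dAB : Disjoint (P * mon (2 ^ n) 0).coeff.support (P * mon 0 (-(2 ^ n))).coeff.support := by
      rw [Finset.disjoint_left]
      intro p hpA hpB
      have h1 := (memA p hpA).1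
      have h2 := (memB p hpB).2.1
      linarith
    have dAC : Disjoint (P * mon (2 ^ n) 0).coeff.support (P * mon (2 ^ n) (-(2 ^ n))).coeff.support := by
      rw [Finset.disjoint_left]
      intro p hpA hpC
      have h1 := (memA p hpA).2.2.1
      have h2 := (memC p hpC).2.2.2
      linarith
    have dBC : Disjoint (P * mon 0 (-(2 ^ n))).coeff.support (P * mon (2 ^ n) (-(2 ^ n))).coeff.support := by
      rw [Finset.disjoint_left]
      intro p hpB hpC
      have h1 := (memB p hpB).2.1
      have h2 := (memC p hpC).1
      linarith
    have hsup1 : (P * mon (2 ^ n) 0 + P * mon 0 (-(2 ^ n))).coeff.support =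
        (P * mon (2 ^ n) 0).coeff.support ∪ (P * mon 0 (-(2 ^ n))).coeff.support :=
      Finsupp.support_add_eq dAB
    have dABC : Disjoint ((P * mon (2 ^ n) 0).coeff.support ∪ (P * mon 0 (-(2 ^ n))).coeff.support)
        (P * mon (2 ^ n) (-(2 ^ n))).coeff.support :=
      Finset.disjoint_union_left.mpr ⟨dAC, dBC⟩
    have hsup : (F ^ (2 ^ (n + 1) - 1)).coeff.support =
        (P * mon (2 ^ n) 0).coeff.support ∪ (P * mon 0 (-(2 ^ n))).coeff.support ∪
          (P * mon (2 ^ n) (-(2 ^ n))).coeff.support := by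
      rw [hrw, AddMonoidAlgebra.coeff_add, Finsupp.support_add_eq (by rw [hsup1]; exact dABC), hsup1]
    constructor
    · rw [hsup, Finset.card_union_of_disjoint dABC, Finset.card_union_of_disjoint dAB,
        hSA, hSB, hSC, Finset.card_map, Finset.card_map, Finset.card_map, hcard]
      ring
    · intro p hp
      rw [hsup] at hp
      simp only [Finset.mem_union] at hp
      have e : (2 : ℤ) ^ (n + 1) = 2 * 2 ^ n := by ring
      rcases hp with (hp | hp) | hp
      · obtain ⟨a1, a2, a3, a4⟩ := memA p hp
        refine ⟨by linarith, a2, ?_, a4⟩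
        rw [e]; linarith
      · obtain ⟨a1, a2, a3, a4⟩ := memB p hp
        refine ⟨a1, ?_, a3, by linarith⟩
        rw [e]; linarith
      · obtain ⟨a1, a2, a3, a4⟩ := memC p hp
        exact ⟨by linarith, a2, a3, by linarith⟩


/-- For the odd-rule CA with neighborhood `F = x + 1/y + x/y` (Odd-rule 013),
`|F^(2^n - 1)| = 3^n` for all `n ≥ 0`. -/
theorem oddRule013_growth (n : ℕ) :
    ((mon 1 0 + mon 0 (-1) + mon 1 (-1)) ^ (2 ^ n - 1)).coeff.support.card = 3 ^ n := by
  exact (key n).1
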